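/- Let Σ be a p×p complex Hermitian positive definite matrix, let ξ_Σ and η_Σ be p×p complex Hermitian matrices satisfying tr(Σ⁻¹ ξ_Σ) = 0 and tr(Σ⁻¹ η_Σ) = 0, let τ ∈ ℝⁿ have all entries positive, and let ξ_τ, η_τ ∈ ℝⁿ. Then ∑_{i=1}^n tr((τ_i Σ)⁻¹ (ξ_{τ,i} Σ + τ_i ξ_Σ)(τ_i Σ)⁻¹ (η_{τ,i} Σ + τ_i η_Σ)) = n·p · [ (1/p) tr(Σ⁻¹ ξ_Σ Σ⁻¹ η_Σ) + (1/n) ∑_{i=1}^n ξ_{τ,i} η_{τ,i}/τ_i² ]. -/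

import Mathlib

open Matrix Finset
open scoped ComplexOrder

lemma fisher_summand {p : ℕ} (S ξS ηS : Matrix (Fin p) (Fin p) ℂ)
    (hdet : IsUnit S.det)
    (hξ0 : Matrix.trace (S⁻¹ * ξS) = 0) (hη0 : Matrix.trace (S⁻¹ * ηS) = 0)
    (c a b : ℂ) (hc : c ≠ 0) :
    Matrix.trace ((c • S)⁻¹ * (a • S + c • ξS) * (c • S)⁻¹ * (b • S + c • ηS))
      = a * b / c ^ 2 * p + Matrix.trace (S⁻¹ * ξS * S⁻¹ * ηS) := by
  have hinv : (c • S)⁻¹ = c⁻¹ • S⁻¹ := by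
    apply Matrix.inv_eq_right_inv
    rw [Matrix.smul_mul, Matrix.mul_smul, smul_smul, mul_inv_cancel₀ hc,
      Matrix.mul_nonsing_inv S hdet, one_smul]
  rw [hinv]
  have hSS : S⁻¹ * S = 1 := Matrix.nonsing_inv_mul S hdet
  simp only [Matrix.smul_mul, Matrix.mul_smul, Matrix.mul_add, Matrix.add_mul,
    Matrix.trace_smul, Matrix.trace_add, smul_smul, smul_eq_mul]
  have h1 : S⁻¹ * S * S⁻¹ * S = 1 := by
    rw [hSS, one_mul, hSS]
  have h2 : Matrix.trace (S⁻¹ * S * S⁻¹ * ηS) = 0 := by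
    rw [hSS, one_mul, hη0]
  have h3 : Matrix.trace (S⁻¹ * ξS * S⁻¹ * S) = 0 := by
    rw [mul_assoc, hSS, mul_one, hξ0]
  rw [h1, h2, h3, Matrix.trace_one, Fintype.card_fin]
  field_simp
  ring

/-- Proposition 1 of the paper (Fisher information metric of the compound Gaussian
distribution): under the unit-determinant normalization, where tangent vectors `ξΣ` at `Σ`
are Hermitian with `tr(Σ⁻¹ ξΣ) = 0`, the sum of the Gaussian Fisher metrics at `τ i • Σ`
evaluated at the directional derivatives equals `n p` times
`(1/p) tr(Σ⁻¹ ξΣ Σ⁻¹ ηΣ) + (1/n) ∑ i ξτ i ητ i / (τ i)²`. -/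
theorem compound_gaussian_fisher_metric
    {p n : ℕ} (Sg ξS ηS : Matrix (Fin p) (Fin p) ℂ)
    (hS : Sg.PosDef) (hξS : ξS.IsHermitian) (hηS : ηS.IsHermitian)
    (hξ0 : Matrix.trace (Sg⁻¹ * ξS) = 0) (hη0 : Matrix.trace (Sg⁻¹ * ηS) = 0)
    (τ ξτ ητ : Fin n → ℝ) (hτ : ∀ i, 0 < τ i) :
    ∑ i : Fin n,
      Matrix.trace (((τ i : ℂ) • Sg)⁻¹ * ((ξτ i : ℂ) • Sg + (τ i : ℂ) • ξS) *
        ((τ i : ℂ) • Sg)⁻¹ * ((ητ i : ℂ) • Sg + (τ i : ℂ) • ηS))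
    = (n : ℂ) * (p : ℂ) *
        ((1 / (p : ℂ)) * Matrix.trace (Sg⁻¹ * ξS * Sg⁻¹ * ηS)
          + (1 / (n : ℂ)) * ((∑ i : Fin n, ξτ i * ητ i / (τ i) ^ 2 : ℝ) : ℂ)) := by
  have hdet : IsUnit Sg.det := hS.det_pos.ne'.isUnit
  have hsum : ∀ i : Fin n,
      Matrix.trace (((τ i : ℂ) • Sg)⁻¹ * ((ξτ i : ℂ) • Sg + (τ i : ℂ) • ξS) *
        ((τ i : ℂ) • Sg)⁻¹ * ((ητ i : ℂ) • Sg + (τ i : ℂ) • ηS))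
      = (ξτ i : ℂ) * (ητ i : ℂ) / (τ i : ℂ) ^ 2 * p
        + Matrix.trace (Sg⁻¹ * ξS * Sg⁻¹ * ηS) := by
    intro i
    exact fisher_summand Sg ξS ηS hdet hξ0 hη0 _ _ _
      (by exact_mod_cast (hτ i).ne')
  simp only [hsum, Finset.sum_add_distrib, Finset.sum_const, card_univ, Fintype.card_fin,
    nsmul_eq_mul, ← Finset.sum_mul]
  push_cast
  set T := Matrix.trace (Sg⁻¹ * ξS * Sg⁻¹ * ηS) with hT
  set Sc := ∑ i : Fin n, (ξτ i : ℂ) * (ητ i : ℂ) / (τ i : ℂ) ^ 2 with hSc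
  rcases Nat.eq_zero_or_pos p with hp | hp
  · subst hp
    have hT0 : T = 0 := by
      simp [hT, Matrix.trace]
    simp [hT0]
  rcases Nat.eq_zero_or_pos n with hn | hn
  · subst hn
    simp [hSc]
  have hpc : (p : ℂ) ≠ 0 := by exact_mod_cast hp.ne'
  have hnc : (n : ℂ) ≠ 0 := by exact_mod_cast hn.ne'
  have e1 : (n : ℂ) * p * (1 / p * T) = n * T := by
    field_simp
  have e2 : (n : ℂ) * p * (1 / n * Sc) = p * Sc := by
    field_simp
  rw [mul_add, e1, e2]
  ring
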